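/- Let α, β > 0 with αβ > 1, and let X be an N×N random matrix with independent entries satisfying P(|X_{i,j}| > N^β) ≤ N^{−αβ} for all i,j. If N^{αβ−1} ≥ 2, then the probability that the digraph on [N] with edge set {(i,j) : |X_{i,j}| > N^β} contains a directed cycle is at most 2·N^{1−αβ}. -/

import Mathlib

open MeasureTheory ProbabilityTheory

/-- Cyclic successor in `Fin m`. -/
def cycSucc {m : ℕ} (ℓ : Fin m) : Fin m := ⟨(ℓ.val + 1) % m, Nat.mod_lt _ ℓ.pos⟩

/-- Let `α, β > 0` with `αβ > 1`, and let `X` be an `N × N` random matrix with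
independent entries satisfying `P(|X_{i,j}| > N^β) ≤ N^{-αβ}` for all `i, j`. If
`N^{αβ-1} ≥ 2`, then the probability that the digraph on `[N]` with edges
`{(i,j) : |X_{i,j}| > N^β}` contains a directed cycle is at most `2·N^{1-αβ}`. -/
theorem heavy_entries_digraph_acyclic
    {Ω : Type*} [MeasurableSpace Ω] (P : Measure Ω) [IsProbabilityMeasure P]
    {N : ℕ} (α β : ℝ) (hα : 0 < α) (hβ : 0 < β) (hαβ : 1 < α * β)
    (X : Fin N → Fin N → Ω → ℂ) (hXm : ∀ i j, Measurable (X i j))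
    (hindep : iIndepFun
      (fun p : Fin N × Fin N => X p.1 p.2) P)
    (htail : ∀ i j,
      (P {ω | (N : ℝ) ^ β < ‖X i j ω‖}).toReal ≤ (N : ℝ) ^ (-(α * β)))
    (hN : 2 ≤ (N : ℝ) ^ (α * β - 1)) :
    (P {ω | ∃ (m : ℕ) (i : Fin (m + 1) → Fin N), 1 ≤ m ∧ i 0 = i (Fin.last m) ∧
        Function.Injective (fun ℓ : Fin m => i ℓ.castSucc) ∧
        ∀ ℓ : Fin m, (N : ℝ) ^ β < ‖X (i ℓ.castSucc) (i ℓ.succ) ω‖}).toReal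
      ≤ 2 * (N : ℝ) ^ (1 - α * β) := by
  classical
  have hNpos : 0 < (N : ℝ) := by
    rcases Nat.eq_zero_or_pos N with h | h
    · subst h
      rw [Nat.cast_zero, Real.zero_rpow (by intro h; apply absurd h; intro h; linarith)] at hN
      linarith
    · exact_mod_cast h
  set r : ℝ := (N : ℝ) ^ (1 - α * β) with hr
  have hr0 : 0 < r := Real.rpow_pos_of_pos hNpos _
  have hrhalf : r ≤ 1 / 2 := by
    have : r = ((N : ℝ) ^ (α * β - 1))⁻¹ := by
      rw [hr, ← Real.rpow_neg hNpos.le]; ring_nf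
    rw [this]
    rw [inv_le_comm₀ (by positivity) (by norm_num)]
    linarith
  have hrlt1 : r < 1 := lt_of_le_of_lt hrhalf (by norm_num)
  set T : Set ℂ := {z | (N : ℝ) ^ β < ‖z‖} with hTdef
  have hTm : MeasurableSet T :=
    measurableSet_lt measurable_const continuous_norm.measurable
  set q0 : ENNReal := ENNReal.ofReal ((N : ℝ) ^ (-(α * β))) with hq0
  -- the per-edge tail bound in ℝ≥0∞
  have htail' : ∀ i j, P ((fun ω => X i j ω) ⁻¹' T) ≤ q0 := by
    intro i j
    have : P ((fun ω => X i j ω) ⁻¹' T)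
        = ENNReal.ofReal ((P {ω | (N : ℝ) ^ β < ‖X i j ω‖}).toReal) := by
      rw [ENNReal.ofReal_toReal (measure_ne_top P _)]; rfl
    rw [this]
    exact ENNReal.ofReal_le_ofReal (htail i j)
  -- the event attached to a candidate cycle
  set A : (Σ m : Fin (N + 1), (Fin (m : ℕ) → Fin N)) → Set Ω := fun c =>
    ⋂ ℓ : Fin (c.1 : ℕ), (fun ω => X (c.2 ℓ) (c.2 (cycSucc ℓ)) ω) ⁻¹' T with hA
  -- probability of each candidate cycle event
  have key : ∀ c : (Σ m : Fin (N + 1), (Fin (m : ℕ) → Fin N)),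
      Function.Injective c.2 → P (A c) ≤ q0 ^ (c.1 : ℕ) := by
    rintro ⟨m, f⟩ hf
    set p : Fin (m : ℕ) → Fin N × Fin N := fun ℓ => (f ℓ, f (cycSucc ℓ)) with hp
    have hpinj : Function.Injective p := fun a b h => hf (congrArg Prod.fst h)
    have hset : A ⟨m, f⟩ = ⋂ q ∈ Finset.image p Finset.univ,
        (fun ω => X q.1 q.2 ω) ⁻¹' T := by
      simp only [hA, Finset.set_biInter_finset_image, Finset.set_biInter_coe,
        Set.biInter_univ]
      ext ω
      simp [p]
    rw [hset, hindep.meas_biInter (fun q _ => ⟨T, hTm, rfl⟩)]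
    rw [Finset.prod_image (fun a _ b _ h => hpinj h)]
    calc ∏ ℓ : Fin (m : ℕ), P ((fun ω => X (p ℓ).1 (p ℓ).2 ω) ⁻¹' T)
        ≤ ∏ _ℓ : Fin (m : ℕ), q0 :=
          Finset.prod_le_prod' (fun ℓ _ => htail' (p ℓ).1 (p ℓ).2)
      _ = q0 ^ (m : ℕ) := by simp
  -- the set of candidate cycles
  set S : Finset (Σ m : Fin (N + 1), (Fin (m : ℕ) → Fin N)) :=
    Finset.univ.filter (fun c => 1 ≤ (c.1 : ℕ) ∧ Function.Injective c.2) with hS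
  -- the target event is covered
  have hsub : {ω | ∃ (m : ℕ) (i : Fin (m + 1) → Fin N), 1 ≤ m ∧ i 0 = i (Fin.last m) ∧
      Function.Injective (fun ℓ : Fin m => i ℓ.castSucc) ∧
      ∀ ℓ : Fin m, (N : ℝ) ^ β < ‖X (i ℓ.castSucc) (i ℓ.succ) ω‖}
      ⊆ ⋃ c ∈ S, A c := by
    rintro ω ⟨m, i, hm, hcyc, hinj, hedge⟩
    have hmN : m ≤ N := by
      have := Fintype.card_le_of_injective _ hinj
      simpa using this
    refine Set.mem_iUnion₂.mpr ⟨(⟨⟨m, Nat.lt_succ_of_le hmN⟩, fun ℓ => i ℓ.castSucc⟩ :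
        Σ m : Fin (N + 1), (Fin (m : ℕ) → Fin N)), ?_, ?_⟩
    · simp only [hS, Finset.mem_filter, Finset.mem_univ, true_and]
      exact ⟨hm, hinj⟩
    · simp only [hA, Set.mem_iInter]
      intro ℓ
      have hnext : i (cycSucc ℓ).castSucc = i ℓ.succ := by
        rcases lt_or_eq_of_le (Nat.succ_le_of_lt ℓ.isLt) with h | h
        · congr 1
          ext
          simp [cycSucc, Nat.mod_eq_of_lt h]
        · have h0 : cycSucc ℓ = ⟨0, ℓ.pos⟩ := by
            ext
            simp only [cycSucc]
            rw [show ((ℓ : ℕ) + 1) = m from h, Nat.mod_self]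
          have h1 : ℓ.succ = Fin.last m := by
            ext; simp only [Fin.val_succ, Fin.val_last]; omega
          rw [h0, h1, ← hcyc]
          congr 1
      show X (i ℓ.castSucc) (i (cycSucc ℓ).castSucc) ω ∈ T
      rw [hnext]
      exact hedge ℓ
  -- chain of bounds
  have h1 : P {ω | ∃ (m : ℕ) (i : Fin (m + 1) → Fin N), 1 ≤ m ∧ i 0 = i (Fin.last m) ∧
      Function.Injective (fun ℓ : Fin m => i ℓ.castSucc) ∧
      ∀ ℓ : Fin m, (N : ℝ) ^ β < ‖X (i ℓ.castSucc) (i ℓ.succ) ω‖}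
      ≤ ∑ c ∈ S, P (A c) :=
    (measure_mono hsub).trans (measure_biUnion_finset_le S A)
  have h2 : ∑ c ∈ S, P (A c) ≤ ∑ c : (Σ m : Fin (N + 1), (Fin (m : ℕ) → Fin N)),
      (if 1 ≤ (c.1 : ℕ) then q0 ^ (c.1 : ℕ) else 0) := by
    calc ∑ c ∈ S, P (A c)
        ≤ ∑ c ∈ S, (if 1 ≤ (c.1 : ℕ) then q0 ^ (c.1 : ℕ) else 0) := by
          refine Finset.sum_le_sum (fun c hc => ?_)
          simp only [hS, Finset.mem_filter] at hc
          rw [if_pos hc.2.1]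
          exact key c hc.2.2
      _ ≤ _ := Finset.sum_le_sum_of_subset (Finset.subset_univ S)
  have h3 : ∑ c : (Σ m : Fin (N + 1), (Fin (m : ℕ) → Fin N)),
      (if 1 ≤ (c.1 : ℕ) then q0 ^ (c.1 : ℕ) else 0)
      = ∑ m : Fin (N + 1), (N : ENNReal) ^ (m : ℕ) *
          (if 1 ≤ (m : ℕ) then q0 ^ (m : ℕ) else 0) := by
    rw [← Finset.univ_sigma_univ, Finset.sum_sigma]
    refine Finset.sum_congr rfl (fun m _ => ?_)
    trans (∑ _f : Fin (m : ℕ) → Fin N, if 1 ≤ (m : ℕ) then q0 ^ (m : ℕ) else 0)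
    · rfl
    · rw [Finset.sum_const, Finset.card_univ, Fintype.card_fun, nsmul_eq_mul, Nat.cast_pow]
      simp
  have h4 : ∀ m : ℕ, (N : ENNReal) ^ m * q0 ^ m = ENNReal.ofReal (r ^ m) := by
    intro m
    have hNcast : (N : ENNReal) = ENNReal.ofReal (N : ℝ) := by
      simp [ENNReal.ofReal_natCast]
    rw [hNcast, hq0, ← ENNReal.ofReal_pow hNpos.le, ← ENNReal.ofReal_pow (by positivity),
      ← ENNReal.ofReal_mul (by positivity)]
    congr 1
    rw [← mul_pow, hr]
    congr 1
    rw [show (1 : ℝ) - α * β = 1 + (-(α * β)) by ring, Real.rpow_add hNpos, Real.rpow_one]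
  have h5 : ∑ m : Fin (N + 1), (N : ENNReal) ^ (m : ℕ) *
      (if 1 ≤ (m : ℕ) then q0 ^ (m : ℕ) else 0)
      = ENNReal.ofReal (∑ m ∈ Finset.range (N + 1), if 1 ≤ m then r ^ m else 0) := by
    rw [ENNReal.ofReal_sum_of_nonneg (fun m _ => by positivity),
      ← Fin.sum_univ_eq_sum_range (fun m => ENNReal.ofReal (if 1 ≤ m then r ^ m else 0))]
    refine Finset.sum_congr rfl (fun m _ => ?_)
    by_cases h : 1 ≤ (m : ℕ)
    · rw [if_pos h, if_pos h]
      exact h4 (m : ℕ)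
    · simp [h]
  have h6 : (∑ m ∈ Finset.range (N + 1), if 1 ≤ m then r ^ m else 0) ≤ 2 * r := by
    rw [Finset.sum_range_succ' (fun m => if 1 ≤ m then r ^ m else 0)]
    simp only [Nat.le_add_left, if_true, Nat.lt_irrefl, if_neg (by norm_num : ¬ 1 ≤ 0),
      add_zero]
    have : ∀ k, r ^ (k + 1) = r * r ^ k := fun k => by ring
    simp_rw [this, ← Finset.mul_sum]
    have hsum : ∑ k ∈ Finset.range N, r ^ k ≤ 2 := by
      have h7 : ∑ k ∈ Finset.range N, r ^ k ≤ ∑' k : ℕ, r ^ k :=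
        Summable.sum_le_tsum _ (fun k _ => by positivity)
          (summable_geometric_of_lt_one hr0.le hrlt1)
      rw [tsum_geometric_of_lt_one hr0.le hrlt1] at h7
      refine h7.trans ?_
      rw [inv_le_comm₀ (by linarith) (by norm_num)]
      linarith
    calc r * ∑ k ∈ Finset.range N, r ^ k ≤ r * 2 :=
          mul_le_mul_of_nonneg_left hsum hr0.le
      _ = 2 * r := by ring
  have hfinal : P {ω | ∃ (m : ℕ) (i : Fin (m + 1) → Fin N), 1 ≤ m ∧ i 0 = i (Fin.last m) ∧
      Function.Injective (fun ℓ : Fin m => i ℓ.castSucc) ∧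
      ∀ ℓ : Fin m, (N : ℝ) ^ β < ‖X (i ℓ.castSucc) (i ℓ.succ) ω‖}
      ≤ ENNReal.ofReal (2 * r) := by
    refine (h1.trans (h2.trans_eq (h3.trans h5))).trans ?_
    exact ENNReal.ofReal_le_ofReal h6
  calc (P _).toReal ≤ (ENNReal.ofReal (2 * r)).toReal :=
        ENNReal.toReal_mono ENNReal.ofReal_ne_top hfinal
    _ = 2 * r := ENNReal.toReal_ofReal (by positivity)
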